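/- arXiv:2604.11519 — 3 statements merged into one kernel-verified Lean document; each statement's English description precedes it below -/
import Mathlib

section
/- Let p and q be two probability densities on a measurable set Ω with 0 < p(x), q(x) < C for all x ∈ Ω, where C > 0. Then ∫_Ω |p(x) − q(x)|² dx ≤ (2C/(1 − log 2)) · D_KL(p‖q), where D_KL(p‖q) = ∫_Ω p(x) log(p(x)/q(x)) dx. -/
open MeasureTheory

lemma key2 {u : ℝ} (hu : 0 < u) (hu1 : u ≤ 1) :
    (1 - u)^2 / 2 ≤ -Real.log u + u - 1 := by
  set f : ℝ → ℝ := fun x => x - 1 - (1-x)^2/2 - Real.log x with hf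
  have hderiv : ∀ x : ℝ, 0 < x → HasDerivAt f (2 - x - 1/x) x := by
    intro x hx
    have h1 : HasDerivAt (fun y : ℝ => y - 1 - (1-y)^2/2) (1 - (2*(1-x)^1*(-1))/2) x :=
      (((hasDerivAt_id x).sub_const 1).sub
        ((((hasDerivAt_id x).const_sub 1).pow 2).div_const 2))
    have h2 := h1.sub (Real.hasDerivAt_log hx.ne')
    convert h2 using 1
    · rfl
    · rfl
    · rfl
    · ring
  have hanti : AntitoneOn f (Set.Icc u 1) := by
    apply antitoneOn_of_deriv_nonpos (convex_Icc u 1)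
    · apply ContinuousOn.sub
      · fun_prop
      · apply Real.continuousOn_log.mono
        intro x hx
        exact ne_of_gt (lt_of_lt_of_le hu hx.1)
    · intro x hx
      rw [interior_Icc] at hx
      exact ((hderiv x (hu.trans hx.1)).differentiableAt).differentiableWithinAt
    · intro x hx
      rw [interior_Icc] at hx
      have hx0 : 0 < x := hu.trans hx.1
      rw [(hderiv x hx0).deriv]
      have hxx : (1/x) * x = 1 := one_div_mul_cancel hx0.ne'
      nlinarith [sq_nonneg (x - 1), hx0]
  have h := hanti (Set.mem_Icc.2 ⟨le_refl u, hu1⟩) (Set.mem_Icc.2 ⟨hu1, le_refl 1⟩) hu1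
  simp only [hf, Real.log_one] at h
  nlinarith [h]

lemma key1 {u : ℝ} (hu : 0 < u) (hu1 : u ≤ 1) :
    (1 - u)^2 / 2 ≤ u * Real.log u - u + 1 := by
  set g : ℝ → ℝ := fun x => x * Real.log x - x + 1 - (1-x)^2/2 with hg
  have hderiv : ∀ x : ℝ, 0 < x → HasDerivAt g (Real.log x + 1 - x) x := by
    intro x hx
    have h1 := ((((Real.hasDerivAt_mul_log hx.ne').sub (hasDerivAt_id x)).add_const 1).sub
      ((((hasDerivAt_id x).const_sub 1).pow 2).div_const 2))
    convert h1 using 1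
    · rfl
    · rfl
    · rfl
    · simp [id]
      ring
  have hanti : AntitoneOn g (Set.Icc u 1) := by
    apply antitoneOn_of_deriv_nonpos (convex_Icc u 1)
    · apply ContinuousOn.sub
      · apply ContinuousOn.add
        · apply ContinuousOn.sub
          apply ContinuousOn.mul continuousOn_id
          · apply Real.continuousOn_log.mono
            intro x hx
            exact ne_of_gt (lt_of_lt_of_le hu hx.1)
          · exact continuousOn_id
        · exact continuousOn_const
      · fun_prop
    · intro x hx
      rw [interior_Icc] at hx
      exact ((hderiv x (hu.trans hx.1)).differentiableAt).differentiableWithinAt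
    · intro x hx
      rw [interior_Icc] at hx
      have hx0 : 0 < x := hu.trans hx.1
      rw [(hderiv x hx0).deriv]
      have := Real.log_le_sub_one_of_pos hx0
      linarith
  have h := hanti (Set.mem_Icc.2 ⟨le_refl u, hu1⟩) (Set.mem_Icc.2 ⟨hu1, le_refl 1⟩) hu1
  simp only [hg, Real.log_one] at h
  nlinarith [h]

lemma pointwise_bd {a b C : ℝ} (hC : 0 < C) (ha : 0 < a) (haC : a < C)
    (hb : 0 < b) (hbC : b < C) :
    (a - b)^2 ≤ 2 * C * (a * Real.log (a/b) - a + b) := by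
  rcases le_total a b with hab | hab
  · set u : ℝ := a / b with hu_def
    have hu : 0 < u := div_pos ha hb
    have hu1 : u ≤ 1 := (div_le_one hb).2 hab
    have hub : b * u = a := by rw [hu_def]; field_simp
    have H := key1 hu hu1
    have h1 : b * ((1-u)^2/2) ≤ b * (u * Real.log u - u + 1) :=
      mul_le_mul_of_nonneg_left H hb.le
    have h2 : b * (u * Real.log u - u + 1) = a * Real.log u - a + b := by
      rw [show b * (u * Real.log u - u + 1) = (b*u) * Real.log u - (b*u) + b from by ring,
        hub]
    rw [h2] at h1
    have hpos : 0 ≤ a * Real.log u - a + b := le_trans (by positivity) h1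
    have h3 : 2*b*(b*((1-u)^2/2)) ≤ 2*b*(a * Real.log u - a + b) :=
      mul_le_mul_of_nonneg_left h1 (by linarith)
    have h4 : (a-b)^2 = 2*b*(b*((1-u)^2/2)) := by
      rw [← hub]; ring
    calc (a-b)^2 = 2*b*(b*((1-u)^2/2)) := h4
      _ ≤ 2*b*(a * Real.log u - a + b) := h3
      _ ≤ 2*C*(a * Real.log u - a + b) := by nlinarith [hpos, hbC]
  · set u : ℝ := b / a with hu_def
    have hu : 0 < u := div_pos hb ha
    have hu1 : u ≤ 1 := (div_le_one ha).2 hab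
    have hua : a * u = b := by rw [hu_def]; field_simp
    have hlog : Real.log (a/b) = - Real.log u := by
      rw [hu_def, ← Real.log_inv]
      congr 1
      field_simp
    have H := key2 hu hu1
    have h1 : a * ((1-u)^2/2) ≤ a * (-Real.log u + u - 1) :=
      mul_le_mul_of_nonneg_left H ha.le
    have h2 : a * (-Real.log u + u - 1) = a * Real.log (a/b) - a + b := by
      rw [hlog,
        show a * (-Real.log u + u - 1) = a * (-Real.log u) - a + (a*u) from by ring, hua]
    rw [h2] at h1
    have hpos : 0 ≤ a * Real.log (a/b) - a + b := le_trans (by positivity) h1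
    have h3 : 2*a*(a*((1-u)^2/2)) ≤ 2*a*(a * Real.log (a/b) - a + b) :=
      mul_le_mul_of_nonneg_left h1 (by linarith)
    have h4 : (a-b)^2 = 2*a*(a*((1-u)^2/2)) := by
      rw [← hua]; ring
    calc (a-b)^2 = 2*a*(a*((1-u)^2/2)) := h4
      _ ≤ 2*a*(a * Real.log (a/b) - a + b) := h3
      _ ≤ 2*C*(a * Real.log (a/b) - a + b) := by nlinarith [hpos, haC]

/-- L²–KL comparison lemma: for probability densities `p, q` on a measurable set `Ω`,
bounded above by `C` and strictly positive, the squared L² distance is controlled by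
the Kullback–Leibler divergence. -/
theorem sq_L2_le_KL
    {d : ℕ} (Ω : Set (EuclideanSpace ℝ (Fin d))) (hΩ : MeasurableSet Ω)
    (p q : EuclideanSpace ℝ (Fin d) → ℝ) (C : ℝ) (hC : 0 < C)
    (hp_meas : Measurable p) (hq_meas : Measurable q)
    (hp_pos : ∀ x ∈ Ω, 0 < p x) (hq_pos : ∀ x ∈ Ω, 0 < q x)
    (hp_lt : ∀ x ∈ Ω, p x < C) (hq_lt : ∀ x ∈ Ω, q x < C)
    (hp_prob : ∫ x in Ω, p x = 1) (hq_prob : ∫ x in Ω, q x = 1)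
    (hKL_int : IntegrableOn (fun x => p x * Real.log (p x / q x)) Ω) :
    ∫ x in Ω, |p x - q x| ^ 2
      ≤ (2 * C / (1 - Real.log 2)) * ∫ x in Ω, p x * Real.log (p x / q x) := by
  have hp_int : IntegrableOn p Ω := by
    by_contra h
    rw [integral_undef h] at hp_prob
    exact one_ne_zero hp_prob.symm
  have hq_int : IntegrableOn q Ω := by
    by_contra h
    rw [integral_undef h] at hq_prob
    exact one_ne_zero hq_prob.symm
  set h : EuclideanSpace ℝ (Fin d) → ℝ :=
    fun x => p x * Real.log (p x / q x) - p x + q x with hh_def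
  have hh_int : IntegrableOn h Ω := (hKL_int.sub hp_int).add hq_int
  have hptw : ∀ x ∈ Ω, |p x - q x| ^ 2 ≤ 2 * C * h x := by
    intro x hx
    rw [sq_abs]
    exact pointwise_bd hC (hp_pos x hx) (hp_lt x hx) (hq_pos x hx) (hq_lt x hx)
  have hg_int : IntegrableOn (fun x => 2 * C * h x) Ω := hh_int.const_mul (2 * C)
  have hsq_int : IntegrableOn (fun x => |p x - q x| ^ 2) Ω := by
    apply Integrable.mono' hg_int
    · exact (((hp_meas.sub hq_meas).abs.pow measurable_const).aestronglyMeasurable).restrict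
    · rw [ae_restrict_iff' hΩ]
      filter_upwards with x hx
      rw [Real.norm_eq_abs, abs_of_nonneg (by positivity)]
      exact hptw x hx
  have hmain : ∫ x in Ω, |p x - q x| ^ 2 ≤ ∫ x in Ω, 2 * C * h x :=
    setIntegral_mono_on hsq_int hg_int hΩ hptw
  have hInth : ∫ x in Ω, h x = ∫ x in Ω, p x * Real.log (p x / q x) := by
    simp only [hh_def]
    have e1 : ∫ x in Ω, (p x * Real.log (p x / q x) - p x + q x)
        = (∫ x in Ω, (p x * Real.log (p x / q x) - p x)) + ∫ x in Ω, q x :=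
      integral_add (hKL_int.sub hp_int) hq_int
    have e2 : ∫ x in Ω, (p x * Real.log (p x / q x) - p x)
        = (∫ x in Ω, p x * Real.log (p x / q x)) - ∫ x in Ω, p x :=
      integral_sub hKL_int hp_int
    rw [e1, e2, hp_prob, hq_prob]
    ring
  have hKL_nonneg : 0 ≤ ∫ x in Ω, p x * Real.log (p x / q x) := by
    rw [← hInth]
    apply setIntegral_nonneg hΩ
    intro x hx
    have h0 : 0 ≤ 2 * C * h x := le_trans (by positivity) (hptw x hx)
    nlinarith [h0, hC]
  have hconst : ∫ x in Ω, 2 * C * h x = 2 * C * ∫ x in Ω, h x := by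
    exact integral_const_mul (2*C) h
  have hlog2_pos : 0 < 1 - Real.log 2 := by
    have := Real.log_two_lt_d9
    norm_num at this ⊢
    linarith
  have hcoef : 2 * C ≤ 2 * C / (1 - Real.log 2) := by
    have h1 : (1 : ℝ) - Real.log 2 ≤ 1 := by
      have := Real.log_pos (by norm_num : (1:ℝ) < 2)
      linarith
    calc 2 * C = 2 * C / 1 := by ring
      _ ≤ 2 * C / (1 - Real.log 2) :=
        div_le_div_of_nonneg_left (by linarith) hlog2_pos h1
  calc ∫ x in Ω, |p x - q x| ^ 2 ≤ ∫ x in Ω, 2 * C * h x := hmain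
    _ = 2 * C * ∫ x in Ω, p x * Real.log (p x / q x) := by rw [hconst, hInth]
    _ ≤ (2 * C / (1 - Real.log 2)) * ∫ x in Ω, p x * Real.log (p x / q x) :=
        mul_le_mul_of_nonneg_right hcoef hKL_nonneg
end

section
/- Let p and q be probability densities on a domain Ω with 0 < C_min ≤ p(x), q(x) ≤ C_max < ∞, and suppose the score of p is bounded: C_s := sup_{x∈Ω} ‖∇ log p(x)‖² < ∞. Then for any real k ≠ 0 and any λ > 0, ∫_Ω [p(x)^k ∇log p(x) − q(x)^k ∇log q(x)] · ∇log(p(x)/q(x)) p(x) dx ≥ K₁ ∫_Ω ‖∇log(p(x)/q(x))‖² p(x) dx + K₂ D_KL(p‖q), where for k > 0: K₁ = C_min^k − (λ/2) C_s and K₂ = − k² C_max² max{C_min^{2k−2}, C_max^{2k−2}} / ((1 − log 2) λ); and for k < 0: K₁ = C_max^k − (λ/2) C_s and K₂ = − k² C_max² C_min^{2k−2} / ((1 − log 2) λ). -/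
open MeasureTheory RealInnerProductSpace


section AuxScalar

lemma aux_mul_log_sub_nonneg {t : ℝ} (ht : 0 < t) : 0 ≤ t * Real.log t - t + 1 := by
  have h := Real.log_le_sub_one_of_pos (inv_pos.2 ht)
  rw [Real.log_inv] at h
  have h2 := mul_le_mul_of_nonneg_left h ht.le
  have h3 : t * t⁻¹ = 1 := mul_inv_cancel₀ (ne_of_gt ht)
  nlinarith

lemma aux_ineq_ge_one {t : ℝ} (ht : 1 ≤ t) :
    (t - 1) ^ 2 ≤ 2 * t * (t * Real.log t - t + 1) := by
  set f : ℝ → ℝ := fun s => 2 * (s ^ 2 * Real.log s) - 2 * s ^ 2 + 2 * s - (s - 1) ^ 2 with hf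
  have hder : ∀ s : ℝ, 0 < s → HasDerivAt f (4 * (s * Real.log s - s + 1)) s := by
    intro s hs
    have hlog := Real.hasDerivAt_log (ne_of_gt hs)
    have hsq : HasDerivAt (fun s : ℝ => s ^ 2) (2 * s) s := by
      simpa using hasDerivAt_pow 2 s
    have h1 := (hsq.mul hlog).const_mul (2 : ℝ)
    have h2 : HasDerivAt f (2 * (2 * s * Real.log s + s ^ 2 * s⁻¹) - 2 * (2 * s)
        + 2 * 1 - 2 * (s - 1) ^ 1 * 1) s := by
      exact ((h1.sub (hsq.const_mul 2)).add ((hasDerivAt_id s).const_mul 2)).sub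
        (((hasDerivAt_id s).sub_const 1).pow 2)
    convert h2 using 1
    field_simp
    ring
  have hmono : MonotoneOn f (Set.Icc 1 t) := by
    apply monotoneOn_of_deriv_nonneg (convex_Icc 1 t)
    · intro s hs
      exact ((hder s (by linarith [hs.1])).differentiableAt).continuousAt.continuousWithinAt
    · intro s hs
      rw [interior_Icc] at hs
      exact ((hder s (by linarith [hs.1])).differentiableAt).differentiableWithinAt
    · intro s hs
      rw [interior_Icc] at hs
      rw [(hder s (by linarith [hs.1])).deriv]
      nlinarith [aux_mul_log_sub_nonneg (show (0:ℝ) < s by linarith [hs.1])]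
  have h1 : f 1 ≤ f t := hmono (Set.left_mem_Icc.2 ht) (Set.right_mem_Icc.2 ht) ht
  simp only [hf, Real.log_one] at h1
  nlinarith [h1]

lemma aux_ineq_le_one {t : ℝ} (ht0 : 0 < t) (ht : t ≤ 1) :
    (t - 1) ^ 2 ≤ 2 * (t * Real.log t - t + 1) := by
  set f : ℝ → ℝ := fun s => 2 * (s * Real.log s) - 2 * s + 2 - (s - 1) ^ 2 with hf
  have hder : ∀ s : ℝ, 0 < s → HasDerivAt f (2 * Real.log s - 2 * s + 2) s := by
    intro s hs
    have hlog := Real.hasDerivAt_log (ne_of_gt hs)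
    have h1 := ((hasDerivAt_id s).mul hlog).const_mul (2 : ℝ)
    have h2 := (((h1.sub ((hasDerivAt_id s).const_mul 2)).add_const 2).sub
        (((hasDerivAt_id s).sub_const 1).pow 2))
    refine h2.congr_deriv ?_
    simp only [id]
    field_simp
    ring
  have hmono : AntitoneOn f (Set.Icc t 1) := by
    apply antitoneOn_of_deriv_nonpos (convex_Icc t 1)
    · intro s hs
      exact ((hder s (lt_of_lt_of_le ht0 hs.1)).differentiableAt).continuousAt.continuousWithinAt
    · intro s hs
      rw [interior_Icc] at hs
      exact ((hder s (lt_trans ht0 hs.1)).differentiableAt).differentiableWithinAt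
    · intro s hs
      rw [interior_Icc] at hs
      rw [(hder s (lt_trans ht0 hs.1)).deriv]
      nlinarith [Real.log_le_sub_one_of_pos (lt_trans ht0 hs.1)]
  have h1 : f 1 ≤ f t := hmono (Set.left_mem_Icc.2 ht) (Set.right_mem_Icc.2 ht) ht
  simp only [hf, Real.log_one] at h1
  nlinarith [h1]

lemma aux_phi_nonneg {a b : ℝ} (ha : 0 < a) (hb : 0 < b) :
    0 ≤ a * Real.log (a / b) - a + b := by
  have ht : 0 < a / b := div_pos ha hb
  have h := aux_mul_log_sub_nonneg ht
  have hab : b * (a / b) = a := by field_simp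
  have h2 := mul_le_mul_of_nonneg_left h hb.le
  nlinarith [h2]

lemma aux_L2_KL {a b Cmax : ℝ} (ha : 0 < a) (hb : 0 < b) (haM : a ≤ Cmax) (hbM : b ≤ Cmax) :
    (a - b) ^ 2 ≤ 2 * Cmax * (a * Real.log (a / b) - a + b) := by
  have ht : 0 < a / b := div_pos ha hb
  have hbt : b * (a / b) = a := by field_simp
  have hphi := aux_phi_nonneg ha hb
  rcases le_total a b with hle | hle
  · have ht1 : a / b ≤ 1 := (div_le_one hb).2 hle
    have h := aux_ineq_le_one ht ht1
    have h2 := mul_le_mul_of_nonneg_left h (mul_pos hb hb).le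
    have e1 : b * b * ((a / b - 1) ^ 2) = (a - b) ^ 2 := by field_simp
    have e2 : b * b * (2 * (a / b * Real.log (a / b) - a / b + 1))
        = 2 * b * (a * Real.log (a / b) - a + b) := by field_simp
    rw [e1, e2] at h2
    nlinarith [h2]
  · have ht1 : 1 ≤ a / b := (one_le_div hb).2 hle
    have h := aux_ineq_ge_one ht1
    have h2 := mul_le_mul_of_nonneg_left h (mul_pos hb hb).le
    have e1 : b * b * ((a / b - 1) ^ 2) = (a - b) ^ 2 := by field_simp
    have e2 : b * b * (2 * (a / b) * (a / b * Real.log (a / b) - a / b + 1))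
        = 2 * a * (a * Real.log (a / b) - a + b) := by field_simp
    rw [e1, e2] at h2
    nlinarith [h2]

lemma aux_mvt_rpow {a b Cmin Cmax k : ℝ} (hCmin : 0 < Cmin)
    (ha : Cmin ≤ a) (ha' : a ≤ Cmax) (hb : Cmin ≤ b) (hb' : b ≤ Cmax) :
    (a ^ k - b ^ k) ^ 2
      ≤ k ^ 2 * max (Cmin ^ (k - 1)) (Cmax ^ (k - 1)) ^ 2 * (a - b) ^ 2 := by
  set M := max (Cmin ^ (k - 1)) (Cmax ^ (k - 1)) with hM
  have key : ∀ x y : ℝ, Cmin ≤ x → x ≤ Cmax → Cmin ≤ y → y ≤ Cmax → x < y →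
      (y ^ k - x ^ k) ^ 2 ≤ k ^ 2 * M ^ 2 * (y - x) ^ 2 := by
    intro x y hx hx' hy hy' hxy
    have hcont : ContinuousOn (fun s : ℝ => s ^ k) (Set.Icc x y) := by
      intro s hs
      exact (Real.continuousAt_rpow_const s k
        (Or.inl (ne_of_gt (lt_of_lt_of_le hCmin (le_trans hx hs.1))))).continuousWithinAt
    have hderiv : ∀ s ∈ Set.Ioo x y, HasDerivAt (fun s : ℝ => s ^ k) (k * s ^ (k - 1)) s := by
      intro s hs
      have hs0 : s ≠ 0 := ne_of_gt (lt_of_lt_of_le hCmin (le_trans hx hs.1.le))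
      simpa [mul_comm] using Real.hasDerivAt_rpow_const (p := k) (Or.inl hs0)
    obtain ⟨c, hc, hceq⟩ := exists_hasDerivAt_eq_slope (fun s : ℝ => s ^ k)
      (fun s => k * s ^ (k - 1)) hxy hcont hderiv
    have hc0 : 0 < c := lt_of_lt_of_le hCmin (le_trans hx hc.1.le)
    have hcM : c ^ (k - 1) ≤ M := by
      rcases le_total 0 (k - 1) with hk1 | hk1
      · exact le_max_of_le_right (Real.rpow_le_rpow hc0.le (le_trans hc.2.le hy') hk1)
      · exact le_max_of_le_left
          (Real.rpow_le_rpow_of_nonpos hCmin (le_trans hx hc.1.le) hk1)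
    have hcMpos : 0 < c ^ (k - 1) := Real.rpow_pos_of_pos hc0 _
    have heq : y ^ k - x ^ k = k * c ^ (k - 1) * (y - x) := by
      rw [eq_div_iff (by linarith : y - x ≠ 0)] at hceq
      linarith [hceq]
    rw [heq]
    have h1 : (c ^ (k - 1)) ^ 2 ≤ M ^ 2 := by nlinarith
    nlinarith [sq_nonneg k, sq_nonneg (y - x), mul_pos hcMpos hcMpos]
  rcases lt_trichotomy a b with h | h | h
  · have := key a b ha ha' hb hb' h
    nlinarith [this]
  · rw [h]
    have : b - b = 0 := sub_self b
    nlinarith [sq_nonneg (k * M)]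
  · have := key b a hb hb' ha ha' h
    nlinarith [this]

end AuxScalar

section AuxVector

variable {E : Type*} [NormedAddCommGroup E] [InnerProductSpace ℝ E] [CompleteSpace E]

lemma aux_grad_log_div (p q : E → ℝ) (hp : ContDiff ℝ 1 p) (hq : ContDiff ℝ 1 q)
    (x : E) (hpx : 0 < p x) (hqx : 0 < q x) :
    gradient (fun y => Real.log (p y / q y)) x
      = gradient (fun y => Real.log (p y)) x - gradient (fun y => Real.log (q y)) x := by
  have hpd : DifferentiableAt ℝ p x := (hp.differentiable one_ne_zero).differentiableAt
  have hqd : DifferentiableAt ℝ q x := (hq.differentiable one_ne_zero).differentiableAt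
  have hld : DifferentiableAt ℝ (fun y => Real.log (p y)) x := hpd.log (ne_of_gt hpx)
  have hld' : DifferentiableAt ℝ (fun y => Real.log (q y)) x := hqd.log (ne_of_gt hqx)
  have h1 : {y | 0 < p y} ∈ nhds x :=
    (isOpen_lt continuous_const (hp.continuous)).mem_nhds hpx
  have h2 : {y | 0 < q y} ∈ nhds x :=
    (isOpen_lt continuous_const (hq.continuous)).mem_nhds hqx
  have heq : (fun y => Real.log (p y / q y))
      =ᶠ[nhds x] fun y => Real.log (p y) - Real.log (q y) := by
    filter_upwards [h1, h2] with y hy1 hy2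
    exact Real.log_div (ne_of_gt hy1) (ne_of_gt hy2)
  rw [heq.gradient_eq]
  have hsub : HasGradientAt (fun y => Real.log (p y) - Real.log (q y))
      (gradient (fun y => Real.log (p y)) x - gradient (fun y => Real.log (q y)) x) x := by
    rw [hasGradientAt_iff_hasFDerivAt, map_sub]
    exact (hld.hasGradientAt.hasFDerivAt).sub (hld'.hasGradientAt.hasFDerivAt)
  exact hsub.gradient

set_option linter.unusedSectionVars false in
lemma aux_pointwise (U V : E) (P Q m M2 Cs Cmax k lam : ℝ)
    (hP : 0 < P) (hPmax : P ≤ Cmax) (hm : m ≤ Q ^ k) (hU : ‖U‖ ^ 2 ≤ Cs)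
    (hA : (P ^ k - Q ^ k) ^ 2 ≤ k ^ 2 * M2 * (P - Q) ^ 2)
    (hlam : 0 < lam) (hM2 : 0 ≤ M2) :
    (m - lam / 2 * Cs) * (‖U - V‖ ^ 2 * P)
        - (k ^ 2 * M2 * Cmax / (2 * lam)) * (P - Q) ^ 2
      ≤ ⟪P ^ k • U - Q ^ k • V, U - V⟫ * P := by
  set A := P ^ k - Q ^ k with hAdef
  set B := ⟪U, U - V⟫ with hBdef
  have hdecomp : ⟪P ^ k • U - Q ^ k • V, U - V⟫ = A * B + Q ^ k * ‖U - V‖ ^ 2 := by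
    have hvec : P ^ k • U - Q ^ k • V = A • U + Q ^ k • (U - V) := by
      rw [hAdef, sub_smul, smul_sub]; abel
    rw [hvec, inner_add_left, real_inner_smul_left, real_inner_smul_left,
      real_inner_self_eq_norm_sq]
  rw [hdecomp]
  set c := ‖U‖ * ‖U - V‖ with hcdef
  have hc0 : 0 ≤ c := mul_nonneg (norm_nonneg _) (norm_nonneg _)
  have hB : |B| ≤ c := abs_real_inner_le_norm U (U - V)
  have s1 : -(|A| * c) ≤ A * B := by
    have h := neg_abs_le (A * B)
    rw [abs_mul] at h
    nlinarith [mul_le_mul_of_nonneg_left hB (abs_nonneg A)]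
  have s2 : 2 * lam * (|A| * c) ≤ A ^ 2 + lam ^ 2 * c ^ 2 := by
    nlinarith [sq_nonneg (|A| - lam * c), sq_abs A]
  have s3 : c ^ 2 ≤ Cs * ‖U - V‖ ^ 2 := by
    rw [hcdef, mul_pow]
    exact mul_le_mul_of_nonneg_right hU (sq_nonneg _)
  have h2l : (0 : ℝ) < 2 * lam := by linarith
  rw [← mul_le_mul_iff_right₀ h2l]
  have e1 : 2 * lam * ((m - lam / 2 * Cs) * (‖U - V‖ ^ 2 * P)
      - k ^ 2 * M2 * Cmax / (2 * lam) * (P - Q) ^ 2)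
      = (2 * lam * m - lam ^ 2 * Cs) * (‖U - V‖ ^ 2 * P)
        - k ^ 2 * M2 * Cmax * (P - Q) ^ 2 := by
    field_simp
  rw [e1]
  have s1' : -(|A| * c) * (2 * lam * P) ≤ A * B * (2 * lam * P) :=
    mul_le_mul_of_nonneg_right s1 (by positivity)
  have s2' : 2 * lam * (|A| * c) * P ≤ (A ^ 2 + lam ^ 2 * c ^ 2) * P :=
    mul_le_mul_of_nonneg_right s2 hP.le
  have s3' : lam ^ 2 * c ^ 2 * P ≤ lam ^ 2 * (Cs * ‖U - V‖ ^ 2) * P := by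
    have := mul_le_mul_of_nonneg_left s3 (sq_nonneg lam)
    exact mul_le_mul_of_nonneg_right this hP.le
  have s4' : A ^ 2 * P ≤ k ^ 2 * M2 * (P - Q) ^ 2 * Cmax := by
    calc A ^ 2 * P ≤ (k ^ 2 * M2 * (P - Q) ^ 2) * P :=
          mul_le_mul_of_nonneg_right hA hP.le
      _ ≤ k ^ 2 * M2 * (P - Q) ^ 2 * Cmax :=
          mul_le_mul_of_nonneg_left hPmax (by positivity)
  have s5' : 2 * lam * m * (‖U - V‖ ^ 2 * P) ≤ 2 * lam * (Q ^ k) * (‖U - V‖ ^ 2 * P) := by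
    have hnn : (0:ℝ) ≤ 2 * lam * (‖U - V‖ ^ 2 * P) := by positivity
    nlinarith [mul_le_mul_of_nonneg_right hm hnn]
  linarith [s1', s2', s3', s4', s5']

end AuxVector

/-- Lemma on the internal-energy cross term: for probability densities `p, q` bounded
between `C_min` and `C_max` with bounded score of `p`, and any `k ≠ 0`, `λ > 0`, the
integral `∫ [pᵏ∇log p − qᵏ∇log q]·∇log(p/q) p` is bounded below by
`K₁ ∫ ‖∇log(p/q)‖² p + K₂ D_KL(p‖q)` with the explicit constants `K₁, K₂`. -/
theorem internal_energy_cross_term_bound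
    {d : ℕ} (Ω : Set (EuclideanSpace ℝ (Fin d))) (hΩ : MeasurableSet Ω)
    (p q : EuclideanSpace ℝ (Fin d) → ℝ)
    (Cmin Cmax Cs : ℝ) (hCmin : 0 < Cmin) (hCmax : Cmin ≤ Cmax)
    (hp_reg : ContDiff ℝ 1 p) (hq_reg : ContDiff ℝ 1 q)
    (hp_bnd : ∀ x ∈ Ω, Cmin ≤ p x ∧ p x ≤ Cmax)
    (hq_bnd : ∀ x ∈ Ω, Cmin ≤ q x ∧ q x ≤ Cmax)
    (hp_prob : ∫ x in Ω, p x = 1) (hq_prob : ∫ x in Ω, q x = 1)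
    (hCs : ∀ x ∈ Ω, ‖gradient (fun y => Real.log (p y)) x‖ ^ 2 ≤ Cs)
    (k lam : ℝ) (hk : k ≠ 0) (hlam : 0 < lam)
    (K₁ K₂ : ℝ)
    (hKpos : 0 < k →
      K₁ = Cmin ^ k - lam / 2 * Cs ∧
      K₂ = -(k ^ 2 * Cmax ^ 2 * max (Cmin ^ (2 * k - 2)) (Cmax ^ (2 * k - 2)))
            / ((1 - Real.log 2) * lam))
    (hKneg : k < 0 →
      K₁ = Cmax ^ k - lam / 2 * Cs ∧
      K₂ = -(k ^ 2 * Cmax ^ 2 * Cmin ^ (2 * k - 2)) / ((1 - Real.log 2) * lam))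
    (hint_lhs : IntegrableOn (fun x =>
      ⟪(p x ^ k) • gradient (fun y => Real.log (p y)) x
        - (q x ^ k) • gradient (fun y => Real.log (q y)) x,
        gradient (fun y => Real.log (p y / q y)) x⟫ * p x) Ω)
    (hint_grad : IntegrableOn (fun x =>
      ‖gradient (fun y => Real.log (p y / q y)) x‖ ^ 2 * p x) Ω)
    (hint_KL : IntegrableOn (fun x => p x * Real.log (p x / q x)) Ω) :
    K₁ * (∫ x in Ω, ‖gradient (fun y => Real.log (p y / q y)) x‖ ^ 2 * p x)
      + K₂ * (∫ x in Ω, p x * Real.log (p x / q x))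
    ≤ ∫ x in Ω,
        ⟪(p x ^ k) • gradient (fun y => Real.log (p y)) x
          - (q x ^ k) • gradient (fun y => Real.log (q y)) x,
          gradient (fun y => Real.log (p y / q y)) x⟫ * p x := by
  have hCmaxpos : 0 < Cmax := lt_of_lt_of_le hCmin hCmax
  have hppos : ∀ x ∈ Ω, 0 < p x := fun x hx => lt_of_lt_of_le hCmin (hp_bnd x hx).1
  have hqpos : ∀ x ∈ Ω, 0 < q x := fun x hx => lt_of_lt_of_le hCmin (hq_bnd x hx).1
  set u := fun x => gradient (fun y => Real.log (p y)) x with hu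
  set v := fun x => gradient (fun y => Real.log (q y)) x with hv
  set w := fun x => gradient (fun y => Real.log (p y / q y)) x with hw
  have hwx : ∀ x ∈ Ω, w x = u x - v x := fun x hx =>
    aux_grad_log_div p q hp_reg hq_reg x (hppos x hx) (hqpos x hx)
  -- extract constants
  obtain ⟨m, M2, hM2, hK1, hK2, hmq, hMVT⟩ :
      ∃ m M2 : ℝ, 0 ≤ M2 ∧ K₁ = m - lam / 2 * Cs ∧
        K₂ = -(k ^ 2 * Cmax ^ 2 * M2) / ((1 - Real.log 2) * lam) ∧
        (∀ x ∈ Ω, m ≤ q x ^ k) ∧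
        (∀ x ∈ Ω, (p x ^ k - q x ^ k) ^ 2 ≤ k ^ 2 * M2 * (p x - q x) ^ 2) := by
    have hsq : ∀ r : ℝ, 0 < r → (r ^ (k - 1)) ^ 2 = r ^ (2 * k - 2) := by
      intro r hr
      rw [sq, ← Real.rpow_add hr]
      congr 1
      ring
    rcases lt_or_gt_of_ne hk with hkneg | hkpos
    · obtain ⟨h1, h2⟩ := hKneg hkneg
      refine ⟨Cmax ^ k, Cmin ^ (2 * k - 2), (Real.rpow_pos_of_pos hCmin _).le, h1, h2, ?_, ?_⟩
      · intro x hx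
        exact Real.rpow_le_rpow_of_nonpos (hqpos x hx) (hq_bnd x hx).2 hkneg.le
      · intro x hx
        have h := aux_mvt_rpow (k := k) hCmin (hp_bnd x hx).1 (hp_bnd x hx).2
          (hq_bnd x hx).1 (hq_bnd x hx).2
        have hmax : max (Cmin ^ (k - 1)) (Cmax ^ (k - 1)) = Cmin ^ (k - 1) :=
          max_eq_left (Real.rpow_le_rpow_of_nonpos hCmin hCmax (by linarith))
        rw [hmax, hsq Cmin hCmin] at h
        exact h
    · obtain ⟨h1, h2⟩ := hKpos hkpos
      refine ⟨Cmin ^ k, max (Cmin ^ (2 * k - 2)) (Cmax ^ (2 * k - 2)),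
        le_max_of_le_left (Real.rpow_pos_of_pos hCmin _).le, h1, h2, ?_, ?_⟩
      · intro x hx
        exact Real.rpow_le_rpow hCmin.le (hq_bnd x hx).1 hkpos.le
      · intro x hx
        have h := aux_mvt_rpow (k := k) hCmin (hp_bnd x hx).1 (hp_bnd x hx).2
          (hq_bnd x hx).1 (hq_bnd x hx).2
        have hmaxsq : max (Cmin ^ (k - 1)) (Cmax ^ (k - 1)) ^ 2
            = max (Cmin ^ (2 * k - 2)) (Cmax ^ (2 * k - 2)) := by
          rcases le_total (Cmin ^ (k - 1)) (Cmax ^ (k - 1)) with hle | hle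
          · rw [max_eq_right hle, hsq Cmax hCmaxpos, max_eq_right]
            rw [← hsq Cmin hCmin, ← hsq Cmax hCmaxpos]
            exact pow_le_pow_left₀ (Real.rpow_pos_of_pos hCmin _).le hle 2
          · rw [max_eq_left hle, hsq Cmin hCmin, max_eq_left]
            rw [← hsq Cmin hCmin, ← hsq Cmax hCmaxpos]
            exact pow_le_pow_left₀ (Real.rpow_pos_of_pos hCmaxpos _).le hle 2
        rw [hmaxsq] at h
        exact h
  set C₃ := k ^ 2 * M2 * Cmax / (2 * lam) with hC3
  have hC3nonneg : 0 ≤ C₃ := by positivity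
  -- integrability / finiteness
  have hpint : IntegrableOn p Ω := by
    by_contra h
    rw [MeasureTheory.integral_undef h] at hp_prob
    norm_num at hp_prob
  have hqint : IntegrableOn q Ω := by
    by_contra h
    rw [MeasureTheory.integral_undef h] at hq_prob
    norm_num at hq_prob
  have hfin : IsFiniteMeasure (volume.restrict Ω) := by
    constructor
    have hconst : Integrable (fun _ => Cmin) (volume.restrict Ω) := by
      apply hpint.mono' aestronglyMeasurable_const
      rw [ae_restrict_iff' hΩ]
      exact Filter.Eventually.of_forall fun x hx => by
        rw [Real.norm_eq_abs, abs_of_pos hCmin]; exact (hp_bnd x hx).1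
    rw [integrable_const_iff] at hconst
    rcases hconst with h | h
    · exact absurd h (ne_of_gt hCmin)
    · exact h.measure_univ_lt_top
  have hPQint : IntegrableOn (fun x => (p x - q x) ^ 2) Ω := by
    apply Integrable.mono' (integrable_const ((Cmax - Cmin) ^ 2))
    · exact ((hp_reg.continuous.sub hq_reg.continuous).pow 2).aestronglyMeasurable
    · rw [ae_restrict_iff' hΩ]
      refine Filter.Eventually.of_forall fun x hx => ?_
      have h1 := hp_bnd x hx; have h2 := hq_bnd x hx
      rw [Real.norm_eq_abs, abs_of_nonneg (sq_nonneg _)]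
      nlinarith [h1.1, h1.2, h2.1, h2.2]
  -- KL nonneg
  have hKL0 : 0 ≤ ∫ x in Ω, p x * Real.log (p x / q x) := by
    have h0 : ∫ x in Ω, (p x - q x) = 0 := by
      rw [integral_sub hpint hqint, hp_prob, hq_prob]; ring
    rw [← h0]
    have hpq : IntegrableOn (fun x => p x - q x) Ω := hpint.sub hqint
    apply setIntegral_mono_on hpq hint_KL hΩ
    intro x hx
    nlinarith [aux_phi_nonneg (hppos x hx) (hqpos x hx)]
  -- L2 vs KL
  have hL2KL : ∫ x in Ω, (p x - q x) ^ 2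
      ≤ 2 * Cmax * (∫ x in Ω, p x * Real.log (p x / q x)) := by
    have hsub1 : IntegrableOn (fun x => p x * Real.log (p x / q x) - p x) Ω :=
      hint_KL.sub hpint
    have hsum1 : IntegrableOn (fun x => p x * Real.log (p x / q x) - p x + q x) Ω :=
      hsub1.add hqint
    have hgint : IntegrableOn
        (fun x => 2 * Cmax * (p x * Real.log (p x / q x) - p x + q x)) Ω :=
      hsum1.const_mul _
    have step : ∫ x in Ω, (p x - q x) ^ 2
        ≤ ∫ x in Ω, 2 * Cmax * (p x * Real.log (p x / q x) - p x + q x) := by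
      apply setIntegral_mono_on hPQint hgint hΩ
      intro x hx
      exact aux_L2_KL (hppos x hx) (hqpos x hx) (hp_bnd x hx).2 (hq_bnd x hx).2
    have heval : ∫ x in Ω, 2 * Cmax * (p x * Real.log (p x / q x) - p x + q x)
        = 2 * Cmax * (∫ x in Ω, p x * Real.log (p x / q x)) := by
      rw [integral_const_mul, integral_add hsub1 hqint, integral_sub hint_KL hpint,
        hp_prob, hq_prob]
      ring
    linarith [step, heval.symm.le, heval.le]
  -- pointwise bound
  have hptwise : ∀ x ∈ Ω,
      K₁ * (‖w x‖ ^ 2 * p x) - C₃ * (p x - q x) ^ 2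
        ≤ ⟪(p x ^ k) • u x - (q x ^ k) • v x, w x⟫ * p x := by
    intro x hx
    rw [hwx x hx, hK1, hC3]
    exact aux_pointwise (u x) (v x) (p x) (q x) m M2 Cs Cmax k lam
      (hppos x hx) (hp_bnd x hx).2 (hmq x hx) (hCs x hx) (hMVT x hx) hlam hM2
  have hg1 : IntegrableOn (fun x => K₁ * (‖w x‖ ^ 2 * p x)) Ω := hint_grad.const_mul K₁
  have hg2 : IntegrableOn (fun x => C₃ * (p x - q x) ^ 2) Ω := hPQint.const_mul C₃
  have hABint : IntegrableOn
      (fun x => K₁ * (‖w x‖ ^ 2 * p x) - C₃ * (p x - q x) ^ 2) Ω := hg1.sub hg2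
  have hmainint : ∫ x in Ω, (K₁ * (‖w x‖ ^ 2 * p x) - C₃ * (p x - q x) ^ 2)
      ≤ ∫ x in Ω, ⟪(p x ^ k) • u x - (q x ^ k) • v x, w x⟫ * p x :=
    setIntegral_mono_on hABint hint_lhs hΩ hptwise
  have hsplit : ∫ x in Ω, (K₁ * (‖w x‖ ^ 2 * p x) - C₃ * (p x - q x) ^ 2)
      = K₁ * (∫ x in Ω, ‖w x‖ ^ 2 * p x) - C₃ * (∫ x in Ω, (p x - q x) ^ 2) := by
    rw [integral_sub hg1 hg2, integral_const_mul, integral_const_mul]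
  have hlog2 : 0 < 1 - Real.log 2 := by
    have := Real.log_two_lt_d9
    linarith
  have hK2bound : K₂ * (∫ x in Ω, p x * Real.log (p x / q x))
      ≤ -C₃ * (∫ x in Ω, (p x - q x) ^ 2) := by
    rw [hK2]
    have hcoef : C₃ * (2 * Cmax) ≤ k ^ 2 * Cmax ^ 2 * M2 / ((1 - Real.log 2) * lam) := by
      rw [hC3, div_mul_eq_mul_div, div_le_div_iff₀ (by positivity) (by positivity)]
      have hprod : 0 ≤ k ^ 2 * M2 * Cmax ^ 2 * (2 * lam) * Real.log 2 := by
        have : 0 ≤ Real.log 2 := Real.log_nonneg (by norm_num)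
        positivity
      linarith [hprod]
    have h1 : C₃ * (∫ x in Ω, (p x - q x) ^ 2)
        ≤ C₃ * (2 * Cmax * (∫ x in Ω, p x * Real.log (p x / q x))) :=
      mul_le_mul_of_nonneg_left hL2KL hC3nonneg
    have h2 : C₃ * (2 * Cmax) * (∫ x in Ω, p x * Real.log (p x / q x))
        ≤ (k ^ 2 * Cmax ^ 2 * M2 / ((1 - Real.log 2) * lam))
            * (∫ x in Ω, p x * Real.log (p x / q x)) :=
      mul_le_mul_of_nonneg_right hcoef hKL0
    have heq : -(k ^ 2 * Cmax ^ 2 * M2) / ((1 - Real.log 2) * lam)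
        = -(k ^ 2 * Cmax ^ 2 * M2 / ((1 - Real.log 2) * lam)) := by ring
    rw [heq]
    linarith [h1, h2]
  linarith [hmainint, hsplit.symm.le, hsplit.le, hK2bound]
end

section
/- Let A, B : [0,1] → ℝ be C² with bounded derivatives, let τ_k = k/K, Δτ = 1/K, and τ_{k−1/2} = (τ_{k−1} + τ_k)/2. Suppose random estimators Â_j, B̂_k satisfy E|Â_j − A(τ_j)|² ≤ C_A² /N, E|B̂_k − B̃_k|² ≤ C_B²/N with |B̃_k − B(τ_{k−1/2})| ≤ C(Δτ)², and sup_j E|Â_j|² + sup_k E|B̂_k|² ≤ C. Then E|Σ_{k=1}^K ((Â_k + Â_{k−1})/2) B̂_k Δτ − ∫₀¹ A(τ)B(τ) dτ| = O(K^{−2}) + O(N^{−1/2}). -/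
open MeasureTheory Set

section Helpers

lemma cd_deriv {A : ℝ → ℝ} (hA : ContDiff ℝ 2 A) : ContDiff ℝ 1 (deriv A) := by
  have h : ContDiff ℝ ((1:ℕ) + 1 : ℕ) A := hA
  exact (contDiff_succ_iff_deriv.mp (by exact_mod_cast h)).2.2

lemma mvt1 {f : ℝ → ℝ} {s : Set ℝ} (hs : Convex ℝ s)
    (hf : ∀ t ∈ s, DifferentiableAt ℝ f t) {L : ℝ}
    (hb : ∀ t ∈ s, |deriv f t| ≤ L) {x y : ℝ} (hx : x ∈ s) (hy : y ∈ s) :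
    |f y - f x| ≤ L * |y - x| := by
  have := Convex.norm_image_sub_le_of_norm_deriv_le (𝕜 := ℝ) hf
    (fun t ht => by simpa [Real.norm_eq_abs] using hb t ht) hs hx hy
  simpa [Real.norm_eq_abs] using this

lemma taylor2 {f : ℝ → ℝ} (hf : ContDiff ℝ 2 f) {L a b : ℝ}
    (hb : ∀ t ∈ Icc a b, |deriv (deriv f) t| ≤ L)
    {x y : ℝ} (hx : x ∈ Icc a b) (hy : y ∈ Icc a b) :
    |f y - f x - deriv f x * (y - x)| ≤ L * (y - x) ^ 2 := by
  have hf1 : Differentiable ℝ f := hf.differentiable (by norm_num)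
  have hfd : Differentiable ℝ (deriv f) := (cd_deriv hf).differentiable one_ne_zero
  set g : ℝ → ℝ := fun t => f t - (f x + deriv f x * (t - x)) with hg
  have hgx : g x = 0 := by simp [hg]
  have hgd : ∀ t, HasDerivAt g (deriv f t - deriv f x) t := by
    intro t
    have h1 : HasDerivAt (fun t : ℝ => f x + deriv f x * (t - x)) (deriv f x) t := by
      simpa using ((((hasDerivAt_id t).sub_const x).const_mul (deriv f x)).const_add (f x))
    exact ((hf1 t).hasDerivAt).sub h1
  have hsub : uIcc x y ⊆ Icc a b := uIcc_subset_Icc hx hy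
  have key : |g y - g x| ≤ (L * |y - x|) * |y - x| := by
    refine mvt1 (convex_uIcc x y) (fun t _ => (hgd t).differentiableAt) ?_
      left_mem_uIcc right_mem_uIcc
    intro t ht
    have hdg : deriv g t = deriv f t - deriv f x := (hgd t).deriv
    rw [hdg]
    have h1 : |deriv f t - deriv f x| ≤ L * |t - x| :=
      mvt1 (convex_Icc a b) (fun u _ => hfd u) hb (hsub left_mem_uIcc) (hsub ht)
    have h2 : |t - x| ≤ |y - x| := by
      rcases le_total x y with h | h
      · rw [uIcc_of_le h] at ht
        rw [abs_of_nonneg (by linarith [ht.1]), abs_of_nonneg (by linarith)]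
        linarith [ht.2]
      · rw [uIcc_of_ge h] at ht
        rw [abs_of_nonpos (by linarith [ht.2]), abs_of_nonpos (by linarith)]
        linarith [ht.1]
    have hL : 0 ≤ L := le_trans (abs_nonneg _) (hb x hx)
    calc |deriv f t - deriv f x| ≤ L * |t - x| := h1
      _ ≤ L * |y - x| := by apply mul_le_mul_of_nonneg_left h2 hL
  have : |g y| ≤ L * |y - x| * |y - x| := by simpa [hgx] using key
  calc |f y - f x - deriv f x * (y - x)| = |g y| := by rw [hg]; ring_nf
    _ ≤ L * |y - x| * |y - x| := this
    _ = L * (y - x) ^ 2 := by rw [mul_assoc, abs_mul_abs_self]; ring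

lemma midpoint_quad {f : ℝ → ℝ} (hf : ContDiff ℝ 2 f) {L a b : ℝ} (hab : a ≤ b)
    (hb : ∀ t ∈ Icc a b, |deriv (deriv f) t| ≤ L) :
    |(∫ τ in a..b, f τ) - f ((a + b) / 2) * (b - a)| ≤ L * (b - a) ^ 3 := by
  set m : ℝ := (a + b) / 2 with hm
  have hmmem : m ∈ Icc a b := by constructor <;> [skip; skip] <;> simp [hm] <;> linarith
  have hL : 0 ≤ L := le_trans (abs_nonneg _) (hb m hmmem)
  have hlin : (∫ τ in a..b, (f m + deriv f m * (τ - m))) = f m * (b - a) := by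
    have h1 : IntervalIntegrable (fun _ : ℝ => f m) volume a b := intervalIntegrable_const
    have h2 : IntervalIntegrable (fun τ : ℝ => deriv f m * (τ - m)) volume a b :=
      (Continuous.intervalIntegrable (by continuity) a b)
    rw [intervalIntegral.integral_add h1 h2, intervalIntegral.integral_const]
    have h3 : (∫ τ in a..b, deriv f m * (τ - m)) = deriv f m * ((b^2 - a^2)/2 - m * (b - a)) := by
      rw [intervalIntegral.integral_const_mul]
      have : (∫ τ in a..b, (τ - m)) = (b^2 - a^2)/2 - m * (b - a) := by
        rw [intervalIntegral.integral_sub (Continuous.intervalIntegrable (by continuity) a b)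
          intervalIntegrable_const, integral_id, intervalIntegral.integral_const]
        rw [smul_eq_mul, hm]; ring
      rw [this]
    rw [h3, smul_eq_mul]; ring
  have hfc : IntervalIntegrable f volume a b := hf.continuous.intervalIntegrable a b
  have hlc : IntervalIntegrable (fun τ : ℝ => f m + deriv f m * (τ - m)) volume a b :=
    Continuous.intervalIntegrable (by continuity) a b
  have key : |(∫ τ in a..b, (f τ - (f m + deriv f m * (τ - m))))| ≤ (L * (b-a)^2) * |b - a| := by
    rw [← Real.norm_eq_abs]
    apply intervalIntegral.norm_integral_le_of_norm_le_const
    intro t ht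
    have ht' : t ∈ Icc a b := by
      rw [uIoc_of_le hab] at ht; exact ⟨le_of_lt ht.1, ht.2⟩
    have := taylor2 hf hb hmmem ht'
    have h2 : (t - m)^2 ≤ (b - a)^2 := by
      have h3 : |t - m| ≤ |b - a| := by
        rw [abs_of_nonneg (by linarith : (0:ℝ) ≤ b - a), abs_le]
        obtain ⟨h4, h5⟩ := ht'; obtain ⟨h6, h7⟩ := hmmem
        constructor <;> linarith
      calc (t-m)^2 = |t-m|^2 := (sq_abs _).symm
        _ ≤ |b-a|^2 := by apply pow_le_pow_left₀ (abs_nonneg _) h3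
        _ = (b-a)^2 := sq_abs _
    calc ‖f t - (f m + deriv f m * (t - m))‖ = |f t - f m - deriv f m * (t - m)| := by
          rw [Real.norm_eq_abs]; ring_nf
      _ ≤ L * (t - m)^2 := this
      _ ≤ L * (b - a)^2 := by apply mul_le_mul_of_nonneg_left h2 hL
  rw [intervalIntegral.integral_sub hfc hlc, hlin] at key
  calc |(∫ τ in a..b, f τ) - f m * (b - a)| ≤ (L * (b-a)^2) * |b - a| := key
    _ = L * (b - a)^3 := by rw [abs_of_nonneg (by linarith)]; ring

lemma deriv2_mul {A B : ℝ → ℝ} (hA : ContDiff ℝ 2 A) (hB : ContDiff ℝ 2 B) (t : ℝ) :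
    deriv (deriv (fun τ => A τ * B τ)) t =
      deriv (deriv A) t * B t + 2 * (deriv A t * deriv B t) + A t * deriv (deriv B) t := by
  have hA1 : Differentiable ℝ A := hA.differentiable (by norm_num)
  have hB1 : Differentiable ℝ B := hB.differentiable (by norm_num)
  have hA' : Differentiable ℝ (deriv A) := (cd_deriv hA).differentiable one_ne_zero
  have hB' : Differentiable ℝ (deriv B) := (cd_deriv hB).differentiable one_ne_zero
  have h1 : deriv (fun τ => A τ * B τ) = fun τ => deriv A τ * B τ + A τ * deriv B τ :=
    funext fun τ => deriv_mul (hA1 τ) (hB1 τ)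
  rw [h1, deriv_fun_add (f := fun τ => deriv A τ * B τ) (g := fun τ => A τ * deriv B τ) ((hA' t).mul (hB1 t)) ((hA1 t).mul (hB' t)),
    deriv_fun_mul (hA' t) (hB1 t), deriv_fun_mul (hA1 t) (hB' t)]
  ring

lemma mul_abs_am_gm {s x y : ℝ} (hs : 0 < s) : |x * y| ≤ (s * x ^ 2 + y ^ 2 / s) / 2 := by
  rw [abs_mul]
  have key : 2 * s * (|x| * |y|) ≤ s ^ 2 * x ^ 2 + y ^ 2 := by
    nlinarith [sq_nonneg (s * |x| - |y|), sq_abs x, sq_abs y]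
  rw [← sub_nonneg]
  have h2 : (s * x ^ 2 + y ^ 2 / s) / 2 - |x| * |y|
      = (s ^ 2 * x ^ 2 + y ^ 2 - 2 * s * (|x| * |y|)) / (2 * s) := by
    field_simp
  rw [h2]
  exact div_nonneg (by linarith) (by positivity)

lemma integrable_abs_mul {Ω : Type*} [MeasurableSpace Ω] {μ : Measure Ω}
    {X Y : Ω → ℝ} (hX : AEStronglyMeasurable X μ) (hY : AEStronglyMeasurable Y μ)
    (hX2 : Integrable (fun ω => X ω ^ 2) μ) (hY2 : Integrable (fun ω => Y ω ^ 2) μ) :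
    Integrable (fun ω => |X ω * Y ω|) μ := by
  have hg : Integrable (fun ω => (1 * X ω ^ 2 + Y ω ^ 2 / 1) / 2) μ :=
    ((hX2.const_mul 1).add (hY2.div_const 1)).div_const 2
  refine hg.mono' ?_ ?_
  · have := (hX.mul hY).norm
    simpa [Real.norm_eq_abs, abs_mul] using this
  · filter_upwards with ω
    rw [Real.norm_eq_abs, abs_abs]
    exact mul_abs_am_gm one_pos

lemma integral_abs_mul_le {Ω : Type*} [MeasurableSpace Ω] (μ : Measure Ω) [IsProbabilityMeasure μ]
    {X Y : Ω → ℝ}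
    (hX2 : Integrable (fun ω => X ω ^ 2) μ) (hY2 : Integrable (fun ω => Y ω ^ 2) μ)
    {a b s : ℝ} (hs : 0 < s) (hXa : (∫ ω, X ω ^ 2 ∂μ) ≤ a) (hYb : (∫ ω, Y ω ^ 2 ∂μ) ≤ b) :
    (∫ ω, |X ω * Y ω| ∂μ) ≤ (s * a + b / s) / 2 := by
  have hg : Integrable (fun ω => (s * X ω ^ 2 + Y ω ^ 2 / s) / 2) μ :=
    ((hX2.const_mul s).add (hY2.div_const s)).div_const 2
  have hmono : (∫ ω, |X ω * Y ω| ∂μ) ≤ ∫ ω, (s * X ω ^ 2 + Y ω ^ 2 / s) / 2 ∂μ := by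
    apply integral_mono_of_nonneg (Filter.Eventually.of_forall fun ω => abs_nonneg _) hg
    exact Filter.Eventually.of_forall fun ω => mul_abs_am_gm hs
  refine hmono.trans ?_
  rw [integral_div, integral_add (hX2.const_mul s) (hY2.div_const s), integral_const_mul,
    integral_div]
  gcongr

end Helpers

set_option maxHeartbeats 4000000

/-- Consistency of the discrete geometric objective (abstract form): the discrete
Monte Carlo midpoint-type sum approximates `∫₀¹ A B` with error
`O(K⁻²) + O(N^{−1/2})`, with a constant depending only on the regularity and moment
bounds `M, C_A, C_B, C`. -/
theorem discrete_geometric_objective_consistency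
    {Ω : Type*} [MeasurableSpace Ω] (μ : Measure Ω) [IsProbabilityMeasure μ]
    (M C_A C_B C : ℝ) (hM : 0 ≤ M) (hCA : 0 ≤ C_A) (hCB : 0 ≤ C_B) (hC : 0 ≤ C) :
    ∃ C' : ℝ, 0 < C' ∧
      ∀ (K N : ℕ), 0 < K → 0 < N →
      ∀ (A B : ℝ → ℝ) (Ah Bh : ℕ → Ω → ℝ) (Bt : ℕ → ℝ),
        ContDiff ℝ 2 A → ContDiff ℝ 2 B →
        (∀ τ ∈ Set.Icc (0:ℝ) 1,
          |A τ| ≤ M ∧ |deriv A τ| ≤ M ∧ |iteratedDeriv 2 A τ| ≤ M) →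
        (∀ τ ∈ Set.Icc (0:ℝ) 1,
          |B τ| ≤ M ∧ |deriv B τ| ≤ M ∧ |iteratedDeriv 2 B τ| ≤ M) →
        (∀ j, Measurable (Ah j)) → (∀ k, Measurable (Bh k)) →
        (∀ j ≤ K, Integrable (fun ω => |Ah j ω - A ((j : ℝ) / K)| ^ 2) μ) →
        (∀ j ≤ K, (∫ ω, |Ah j ω - A ((j : ℝ) / K)| ^ 2 ∂μ) ≤ C_A ^ 2 / N) →
        (∀ k, 1 ≤ k → k ≤ K → Integrable (fun ω => |Bh k ω - Bt k| ^ 2) μ) →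
        (∀ k, 1 ≤ k → k ≤ K → (∫ ω, |Bh k ω - Bt k| ^ 2 ∂μ) ≤ C_B ^ 2 / N) →
        (∀ k, 1 ≤ k → k ≤ K →
          |Bt k - B (((k : ℝ) - 1 / 2) / K)| ≤ C * (1 / K) ^ 2) →
        (∀ j ≤ K, Integrable (fun ω => (Ah j ω) ^ 2) μ) →
        (∀ j ≤ K, (∫ ω, (Ah j ω) ^ 2 ∂μ) ≤ C) →
        (∀ k, 1 ≤ k → k ≤ K → Integrable (fun ω => (Bh k ω) ^ 2) μ) →
        (∀ k, 1 ≤ k → k ≤ K → (∫ ω, (Bh k ω) ^ 2 ∂μ) ≤ C) →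
        (∫ ω, |(∑ k ∈ Finset.range K,
              ((Ah (k + 1) ω + Ah k ω) / 2) * Bh (k + 1) ω * (1 / K))
            - ∫ τ in (0:ℝ)..1, A τ * B τ| ∂μ)
          ≤ C' * ((1 / (K : ℝ)) ^ 2 + 1 / Real.sqrt N) := by
  set cs : ℝ := (C_A ^ 2 + C) / 2 + M * ((C_B ^ 2 + 1) / 2) with hcs
  set cdet : ℝ := M * (M + C) + M * C + 4 * M ^ 2 with hcdet
  have hcs0 : 0 ≤ cs := by positivity
  have hcdet0 : 0 ≤ cdet := by positivity
  refine ⟨cs + cdet + 1, by positivity, ?_⟩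
  intro K N hK hN A B Ah Bh Bt hA hB hAbd hBbd hAhm hBhm hAint hAb hBint hBb hBtmid
    hA2int hA2b hB2int hB2b
  have hKr : (0:ℝ) < (K:ℝ) := by exact_mod_cast hK
  have hNr : (0:ℝ) < (N:ℝ) := by exact_mod_cast hN
  set sN : ℝ := Real.sqrt N with hsN
  have hsN0 : 0 < sN := Real.sqrt_pos.mpr hNr
  have hNs : (N:ℝ) = sN ^ 2 := (Real.sq_sqrt hNr.le).symm
  -- membership of grid points
  have hmem : ∀ j : ℕ, j ≤ K → ((j : ℝ) / K) ∈ Icc (0:ℝ) 1 := by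
    intro j hj
    constructor
    · positivity
    · rw [div_le_one hKr]; exact_mod_cast hj
  -- second-derivative bounds via iteratedDeriv
  have hAdd : ∀ t ∈ Icc (0:ℝ) 1, |deriv (deriv A) t| ≤ M := by
    intro t ht
    have := (hAbd t ht).2.2
    rwa [show iteratedDeriv 2 A = deriv (deriv A) by
      rw [show (2:ℕ) = 1 + 1 from rfl, iteratedDeriv_succ, iteratedDeriv_one]] at this
  have hBdd : ∀ t ∈ Icc (0:ℝ) 1, |deriv (deriv B) t| ≤ M := by
    intro t ht
    have := (hBbd t ht).2.2
    rwa [show iteratedDeriv 2 B = deriv (deriv B) by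
      rw [show (2:ℕ) = 1 + 1 from rfl, iteratedDeriv_succ, iteratedDeriv_one]] at this
  -- second derivative of the product is bounded by 4M²
  have hABc : ContDiff ℝ 2 (fun τ => A τ * B τ) := hA.mul hB
  have hfbd : ∀ t ∈ Icc (0:ℝ) 1, |deriv (deriv (fun τ => A τ * B τ)) t| ≤ 4 * M ^ 2 := by
    intro t ht
    rw [deriv2_mul hA hB t]
    obtain ⟨hb1, hb2, _⟩ := hAbd t ht
    obtain ⟨hb4, hb5, _⟩ := hBbd t ht
    have h1 : |deriv (deriv A) t * B t| ≤ M * M := by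
      rw [abs_mul]
      exact mul_le_mul (hAdd t ht) hb4 (abs_nonneg _) hM
    have h2 : |deriv A t * deriv B t| ≤ M * M := by
      rw [abs_mul]
      exact mul_le_mul hb2 hb5 (abs_nonneg _) hM
    have h3 : |A t * deriv (deriv B) t| ≤ M * M := by
      rw [abs_mul]
      exact mul_le_mul hb1 (hBdd t ht) (abs_nonneg _) hM
    calc |deriv (deriv A) t * B t + 2 * (deriv A t * deriv B t) + A t * deriv (deriv B) t|
        ≤ |deriv (deriv A) t * B t + 2 * (deriv A t * deriv B t)| + |A t * deriv (deriv B) t| :=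
          abs_add_le _ _
      _ ≤ |deriv (deriv A) t * B t| + |2 * (deriv A t * deriv B t)| + |A t * deriv (deriv B) t| :=
          by gcongr; exact abs_add_le _ _
      _ = |deriv (deriv A) t * B t| + 2 * |deriv A t * deriv B t| + |A t * deriv (deriv B) t| :=
          by rw [show |2 * (deriv A t * deriv B t)| = 2 * |deriv A t * deriv B t| by
            rw [abs_mul, abs_two]]
      _ ≤ M * M + 2 * (M * M) + M * M :=
          add_le_add (add_le_add h1 (mul_le_mul_of_nonneg_left h2 (by norm_num))) h3
      _ = 4 * M ^ 2 := by ring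
  -- local abbreviations
  set D : ℕ → ℝ := fun k =>
    ((A (((k+1:ℕ):ℝ)/K) + A ((k:ℝ)/K))/2) * Bt (k+1) * (1/(K:ℝ)) with hD
  set Iv : ℕ → ℝ := fun k => ∫ τ in ((k:ℝ)/K)..(((k+1:ℕ):ℝ)/K), A τ * B τ with hIv
  -- splitting the integral
  have hsplit : (∫ τ in (0:ℝ)..1, A τ * B τ) = ∑ k ∈ Finset.range K, Iv k := by
    have h : ∑ k ∈ Finset.range K, ∫ τ in ((k:ℝ)/K)..(((k+1:ℕ):ℝ)/K), A τ * B τ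
        = ∫ τ in (((0:ℕ):ℝ)/K)..(((K:ℕ):ℝ)/K), A τ * B τ :=
      intervalIntegral.sum_integral_adjacent_intervals (μ := volume)
        (f := fun τ => A τ * B τ) (a := fun i : ℕ => (i:ℝ)/K) (n := K)
        (fun i _ => (hA.continuous.mul hB.continuous).intervalIntegrable _ _)
    rw [show (((0:ℕ):ℝ))/(K:ℝ) = 0 by simp, show ((K:ℕ):ℝ)/(K:ℝ) = 1 by field_simp] at h
    rw [hIv]
    exact h.symm
  -- stochastic estimate for each k
  have hstoch : ∀ k ∈ Finset.range K,
      Integrable (fun ω => |((Ah (k+1) ω + Ah k ω)/2) * Bh (k+1) ω * (1/(K:ℝ)) - D k|) μ ∧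
      (∫ ω, |((Ah (k+1) ω + Ah k ω)/2) * Bh (k+1) ω * (1/(K:ℝ)) - D k| ∂μ)
        ≤ (1/(K:ℝ)) * (cs / sN) := by
    intro k hk
    rw [Finset.mem_range] at hk
    have hk1 : k + 1 ≤ K := hk
    have hkK : k ≤ K := le_of_lt hk
    have h1k : 1 ≤ k + 1 := Nat.succ_le_succ (Nat.zero_le k)
    set u : Ω → ℝ := fun ω => Ah (k+1) ω - A (((k+1:ℕ):ℝ)/K) with hu
    set v : Ω → ℝ := fun ω => Ah k ω - A ((k:ℝ)/K) with hv
    set X : Ω → ℝ := fun ω => (u ω + v ω)/2 with hX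
    set Z : Ω → ℝ := fun ω => Bh (k+1) ω - Bt (k+1) with hZ
    have hu2 : Integrable (fun ω => u ω ^ 2) μ := by
      simpa [hu, sq_abs] using hAint (k+1) hk1
    have hv2 : Integrable (fun ω => v ω ^ 2) μ := by
      simpa [hv, sq_abs] using hAint k hkK
    have hu2b : (∫ ω, u ω ^ 2 ∂μ) ≤ C_A ^ 2 / N := by
      simpa [hu, sq_abs] using hAb (k+1) hk1
    have hv2b : (∫ ω, v ω ^ 2 ∂μ) ≤ C_A ^ 2 / N := by
      simpa [hv, sq_abs] using hAb k hkK
    have hXm : Measurable X := by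
      apply Measurable.div_const
      exact (((hAhm (k+1)).sub_const _).add ((hAhm k).sub_const _))
    have hXsq : ∀ ω, X ω ^ 2 ≤ (u ω ^ 2 + v ω ^ 2)/2 := by
      intro ω
      have hid : X ω ^ 2 = (u ω ^ 2 + v ω ^ 2)/2 - ((u ω - v ω)/2)^2 := by
        simp only [hX]; ring
      rw [hid]
      linarith [sq_nonneg ((u ω - v ω)/2)]
    have hX2 : Integrable (fun ω => X ω ^ 2) μ := by
      refine ((hu2.add hv2).div_const 2).mono' (hXm.pow_const 2).aestronglyMeasurable ?_
      filter_upwards with ω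
      rw [Real.norm_eq_abs, abs_of_nonneg (sq_nonneg _)]
      exact hXsq ω
    have hX2b : (∫ ω, X ω ^ 2 ∂μ) ≤ C_A ^ 2 / N := by
      have hmono : (∫ ω, X ω ^ 2 ∂μ) ≤ ∫ ω, (u ω ^ 2 + v ω ^ 2)/2 ∂μ :=
        integral_mono hX2 ((hu2.add hv2).div_const 2) hXsq
      have heq : (∫ ω, (u ω ^ 2 + v ω ^ 2)/2 ∂μ) = ((∫ ω, u ω ^ 2 ∂μ) + ∫ ω, v ω ^ 2 ∂μ)/2 := by
        rw [integral_div, integral_add hu2 hv2]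
      linarith
    have hY2 : Integrable (fun ω => Bh (k+1) ω ^ 2) μ := hB2int (k+1) h1k hk1
    have hY2b : (∫ ω, Bh (k+1) ω ^ 2 ∂μ) ≤ C := hB2b (k+1) h1k hk1
    have hXY : (∫ ω, |X ω * Bh (k+1) ω| ∂μ) ≤ (sN * (C_A ^ 2 / N) + C / sN)/2 :=
      integral_abs_mul_le μ hX2 hY2 hsN0 hX2b hY2b
    have hXYint : Integrable (fun ω => |X ω * Bh (k+1) ω|) μ :=
      integrable_abs_mul hXm.aestronglyMeasurable (hBhm (k+1)).aestronglyMeasurable hX2 hY2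
    have hZ2 : Integrable (fun ω => Z ω ^ 2) μ := by
      simpa [hZ, sq_abs] using hBint (k+1) h1k hk1
    have hZ2b : (∫ ω, Z ω ^ 2 ∂μ) ≤ C_B ^ 2 / N := by
      simpa [hZ, sq_abs] using hBb (k+1) h1k hk1
    have hone : Integrable (fun _ : Ω => (1:ℝ) ^ 2) μ := by
      simpa using integrable_const (α := Ω) (μ := μ) (1:ℝ)
    have honeb : (∫ _ : Ω, (1:ℝ) ^ 2 ∂μ) ≤ 1 := by simp
    have hZab : (∫ ω, |Z ω| ∂μ) ≤ (sN * (C_B ^ 2 / N) + 1 / sN)/2 := by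
      have := integral_abs_mul_le μ (X := Z) (Y := fun _ => (1:ℝ)) hZ2 hone hsN0 hZ2b honeb
      simpa using this
    have hZint : Integrable (fun ω => |Z ω|) μ := by
      have := integrable_abs_mul (X := Z) (Y := fun _ => (1:ℝ))
        ((hBhm (k+1)).sub_const _).aestronglyMeasurable aestronglyMeasurable_const hZ2 hone
      simpa using this
    set abar : ℝ := (A (((k+1:ℕ):ℝ)/K) + A ((k:ℝ)/K))/2 with habar
    have habarM : |abar| ≤ M := by
      have h1 := (hAbd _ (hmem (k+1) hk1)).1
      have h2 := (hAbd _ (hmem k hkK)).1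
      rw [habar, abs_le]
      rw [abs_le] at h1 h2
      constructor <;> [linarith [h1.1, h2.1]; linarith [h1.2, h2.2]]
    have hptw : ∀ ω, |((Ah (k+1) ω + Ah k ω)/2) * Bh (k+1) ω * (1/(K:ℝ)) - D k|
        ≤ (1/(K:ℝ)) * (|X ω * Bh (k+1) ω| + M * |Z ω|) := by
      intro ω
      have heq : ((Ah (k+1) ω + Ah k ω)/2) * Bh (k+1) ω * (1/(K:ℝ)) - D k
          = (X ω * Bh (k+1) ω + abar * Z ω) * (1/(K:ℝ)) := by
        simp only [hD, hX, hu, hv, hZ, habar]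
        ring
      rw [heq, abs_mul, abs_of_nonneg (by positivity : (0:ℝ) ≤ 1/(K:ℝ)), mul_comm]
      have hsum : |X ω * Bh (k+1) ω + abar * Z ω| ≤ |X ω * Bh (k+1) ω| + M * |Z ω| := by
        refine (abs_add_le _ _).trans ?_
        have : |abar * Z ω| ≤ M * |Z ω| := by
          rw [abs_mul]
          exact mul_le_mul_of_nonneg_right habarM (abs_nonneg _)
        linarith
      exact mul_le_mul_of_nonneg_left hsum (by positivity)
    have hgint : Integrable (fun ω => (1/(K:ℝ)) * (|X ω * Bh (k+1) ω| + M * |Z ω|)) μ :=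
      (hXYint.add (hZint.const_mul M)).const_mul _
    have hSmeas : Measurable (fun ω =>
        |((Ah (k+1) ω + Ah k ω)/2) * Bh (k+1) ω * (1/(K:ℝ)) - D k|) := by
      apply Measurable.abs
      apply Measurable.sub_const
      exact ((((hAhm (k+1)).add (hAhm k)).div_const 2).mul (hBhm (k+1))).mul_const _
    constructor
    · refine hgint.mono' hSmeas.aestronglyMeasurable ?_
      filter_upwards with ω
      rw [Real.norm_eq_abs, abs_abs]
      exact hptw ω
    · have hint1 : (∫ ω, |((Ah (k+1) ω + Ah k ω)/2) * Bh (k+1) ω * (1/(K:ℝ)) - D k| ∂μ)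
          ≤ ∫ ω, (1/(K:ℝ)) * (|X ω * Bh (k+1) ω| + M * |Z ω|) ∂μ := by
        apply integral_mono_of_nonneg (Filter.Eventually.of_forall fun ω => abs_nonneg _) hgint
        exact Filter.Eventually.of_forall hptw
      refine hint1.trans ?_
      rw [integral_const_mul, integral_add hXYint (hZint.const_mul M), integral_const_mul]
      have e1 : sN * (C_A ^ 2 / N) = C_A ^ 2 / sN := by
        rw [hNs]; field_simp
      have e2 : sN * (C_B ^ 2 / N) = C_B ^ 2 / sN := by
        rw [hNs]; field_simp
      rw [e1] at hXY
      rw [e2] at hZab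
      have hceq : (C_A ^ 2 / sN + C / sN)/2 + M * ((C_B ^ 2 / sN + 1 / sN)/2) = cs / sN := by
        rw [hcs]
        rw [← add_div, ← add_div, div_div, div_div]
        rw [eq_div_iff (by positivity : sN ≠ 0)]
        field_simp
      have hsum2 : (∫ ω, |X ω * Bh (k+1) ω| ∂μ) + M * (∫ ω, |Z ω| ∂μ) ≤ cs / sN := by
        have h5 := mul_le_mul_of_nonneg_left hZab hM
        linarith
      exact mul_le_mul_of_nonneg_left hsum2 (by positivity)
  -- deterministic estimate for each k
  have hdet : ∀ k ∈ Finset.range K, |D k - Iv k| ≤ cdet * (1/(K:ℝ))^3 := by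
    intro k hk
    rw [Finset.mem_range] at hk
    have hk1 : k + 1 ≤ K := hk
    have hkK : k ≤ K := le_of_lt hk
    have h1k : 1 ≤ k + 1 := Nat.succ_le_succ (Nat.zero_le k)
    set ak : ℝ := (k:ℝ)/K with hak
    set bk : ℝ := ((k+1:ℕ):ℝ)/K with hbk
    set mk : ℝ := (ak + bk)/2 with hmk
    have hbkak : bk - ak = 1/(K:ℝ) := by
      rw [hbk, hak]; push_cast; field_simp; ring
    have hakm : ak ∈ Icc (0:ℝ) 1 := hmem k hkK
    have hbkm : bk ∈ Icc (0:ℝ) 1 := hmem (k+1) hk1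
    have hmkm : mk ∈ Icc (0:ℝ) 1 := by
      constructor
      · rw [hmk]; linarith [hakm.1, hbkm.1]
      · rw [hmk]; linarith [hakm.2, hbkm.2]
    have hd1 : |Bt (k+1) - B mk| ≤ C * (1/(K:ℝ))^2 := by
      have h := hBtmid (k+1) h1k hk1
      have harg : ((((k+1:ℕ)):ℝ) - 1/2)/(K:ℝ) = mk := by
        rw [hmk, hak, hbk]; push_cast; field_simp; ring
      rwa [harg] at h
    have t1 := taylor2 hA hAdd hmkm hbkm
    have t2 := taylor2 hA hAdd hmkm hakm
    have eb : bk - mk = (bk - ak)/2 := by rw [hmk]; ring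
    have ea : ak - mk = -((bk - ak)/2) := by rw [hmk]; ring
    have hd2 : |(A bk + A ak)/2 - A mk| ≤ M * (1/(K:ℝ))^2 := by
      have hcancel : (A bk + A ak)/2 - A mk
          = ((A bk - A mk - deriv A mk * (bk - mk))
            + (A ak - A mk - deriv A mk * (ak - mk)))/2 := by
        rw [hmk]; ring
      rw [hcancel]
      have h6 : |((A bk - A mk - deriv A mk * (bk - mk))
            + (A ak - A mk - deriv A mk * (ak - mk)))/2|
          ≤ (M * (bk - mk)^2 + M * (ak - mk)^2)/2 := by
        rw [abs_div, abs_two]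
        have := (abs_add_le (A bk - A mk - deriv A mk * (bk - mk))
          (A ak - A mk - deriv A mk * (ak - mk))).trans (add_le_add t1 t2)
        linarith
      refine h6.trans ?_
      rw [eb, ea, hbkak]
      have hq : (0:ℝ) ≤ (1/(K:ℝ))^2 := by positivity
      nlinarith [hM, hq]
    have hd3 : |Iv k - A mk * B mk * (1/(K:ℝ))| ≤ 4 * M^2 * (1/(K:ℝ))^3 := by
      have habk : ak ≤ bk := by
        have : (0:ℝ) < 1/(K:ℝ) := by positivity
        linarith [hbkak]
      have hsubI : Icc ak bk ⊆ Icc (0:ℝ) 1 := fun t ht =>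
        ⟨le_trans hakm.1 ht.1, le_trans ht.2 hbkm.2⟩
      have hmq := midpoint_quad hABc habk (fun t ht => hfbd t (hsubI ht))
      rw [hbkak, ← hmk] at hmq
      have hIvk : Iv k = ∫ τ in ak..bk, A τ * B τ := by
        simp only [hIv, hak, hbk]
      rw [hIvk]
      simpa using hmq
    have hBtb : |Bt (k+1)| ≤ M + C := by
      have h1 := (hBbd mk hmkm).1
      have h2 : (1/(K:ℝ))^2 ≤ 1 := by
        have hK1 : (1:ℝ) ≤ K := by exact_mod_cast hK
        rw [div_pow, one_pow]
        rw [div_le_one (by positivity)]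
        nlinarith
      have h3 : |Bt (k+1)| ≤ |B mk| + |Bt (k+1) - B mk| := by
        calc |Bt (k+1)| = |B mk + (Bt (k+1) - B mk)| := by ring_nf
          _ ≤ |B mk| + |Bt (k+1) - B mk| := abs_add_le _ _
      have h4 : C * (1/(K:ℝ))^2 ≤ C := by nlinarith
      linarith [hd1]
    have hsplitk : D k - Iv k
        = ((A bk + A ak)/2 - A mk) * Bt (k+1) * (1/(K:ℝ))
          + A mk * (Bt (k+1) - B mk) * (1/(K:ℝ))
          + (A mk * B mk * (1/(K:ℝ)) - Iv k) := by
      rw [hD, hbk, hak]; ring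
    have hAmk : |A mk| ≤ M := (hAbd mk hmkm).1
    calc |D k - Iv k| = |((A bk + A ak)/2 - A mk) * Bt (k+1) * (1/(K:ℝ))
          + A mk * (Bt (k+1) - B mk) * (1/(K:ℝ))
          + (A mk * B mk * (1/(K:ℝ)) - Iv k)| := by rw [hsplitk]
      _ ≤ |((A bk + A ak)/2 - A mk) * Bt (k+1) * (1/(K:ℝ))
            + A mk * (Bt (k+1) - B mk) * (1/(K:ℝ))|
          + |A mk * B mk * (1/(K:ℝ)) - Iv k| := abs_add_le _ _
      _ ≤ |((A bk + A ak)/2 - A mk) * Bt (k+1) * (1/(K:ℝ))|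
          + |A mk * (Bt (k+1) - B mk) * (1/(K:ℝ))|
          + |A mk * B mk * (1/(K:ℝ)) - Iv k| := by
            gcongr
            exact abs_add_le _ _
      _ ≤ (M * (1/(K:ℝ))^2) * (M + C) * (1/(K:ℝ))
          + M * (C * (1/(K:ℝ))^2) * (1/(K:ℝ))
          + 4 * M^2 * (1/(K:ℝ))^3 := by
            have hKpos : (0:ℝ) ≤ 1/(K:ℝ) := by positivity
            have e3 : |((A bk + A ak)/2 - A mk) * Bt (k+1) * (1/(K:ℝ))|
                = |(A bk + A ak)/2 - A mk| * |Bt (k+1)| * (1/(K:ℝ)) := by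
              rw [abs_mul, abs_mul, abs_of_nonneg hKpos]
            have e4 : |A mk * (Bt (k+1) - B mk) * (1/(K:ℝ))|
                = |A mk| * |Bt (k+1) - B mk| * (1/(K:ℝ)) := by
              rw [abs_mul, abs_mul, abs_of_nonneg hKpos]
            rw [e3, e4, abs_sub_comm (A mk * B mk * (1/(K:ℝ))) (Iv k)]
            gcongr <;> first
              | exact hd2
              | exact hBtb
              | exact hAmk
              | exact hd1
              | exact hd3
              | positivity
      _ = cdet * (1/(K:ℝ))^3 := by rw [hcdet]; ring
  -- assembly
  have hgK : Integrable (fun ω => ∑ k ∈ Finset.range K,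
      |((Ah (k+1) ω + Ah k ω)/2) * Bh (k+1) ω * (1/(K:ℝ)) - D k|) μ :=
    integrable_finset_sum _ (fun k hk => (hstoch k hk).1)
  have hgint : Integrable (fun ω => (∑ k ∈ Finset.range K,
      |((Ah (k+1) ω + Ah k ω)/2) * Bh (k+1) ω * (1/(K:ℝ)) - D k|)
      + ∑ k ∈ Finset.range K, |D k - Iv k|) μ :=
    hgK.add (integrable_const _)
  have hptws : ∀ ω, |(∑ k ∈ Finset.range K,
        ((Ah (k + 1) ω + Ah k ω) / 2) * Bh (k + 1) ω * (1 / (K:ℝ)))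
        - ∫ τ in (0:ℝ)..1, A τ * B τ|
      ≤ (∑ k ∈ Finset.range K,
        |((Ah (k+1) ω + Ah k ω)/2) * Bh (k+1) ω * (1/(K:ℝ)) - D k|)
        + ∑ k ∈ Finset.range K, |D k - Iv k| := by
    intro ω
    rw [hsplit]
    have hre : (∑ k ∈ Finset.range K,
          ((Ah (k + 1) ω + Ah k ω) / 2) * Bh (k + 1) ω * (1 / (K:ℝ)))
          - ∑ k ∈ Finset.range K, Iv k
        = (∑ k ∈ Finset.range K,
            (((Ah (k + 1) ω + Ah k ω) / 2) * Bh (k + 1) ω * (1 / (K:ℝ)) - D k))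
          + ∑ k ∈ Finset.range K, (D k - Iv k) := by
      rw [Finset.sum_sub_distrib, Finset.sum_sub_distrib]
      ring
    rw [hre]
    refine (abs_add_le _ _).trans ?_
    exact add_le_add (Finset.abs_sum_le_sum_abs _ _) (Finset.abs_sum_le_sum_abs _ _)
  have hout : (∫ ω, |(∑ k ∈ Finset.range K,
        ((Ah (k + 1) ω + Ah k ω) / 2) * Bh (k + 1) ω * (1 / (K:ℝ)))
        - ∫ τ in (0:ℝ)..1, A τ * B τ| ∂μ)
      ≤ ∫ ω, ((∑ k ∈ Finset.range K,
        |((Ah (k+1) ω + Ah k ω)/2) * Bh (k+1) ω * (1/(K:ℝ)) - D k|)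
        + ∑ k ∈ Finset.range K, |D k - Iv k|) ∂μ := by
    apply integral_mono_of_nonneg (Filter.Eventually.of_forall fun ω => abs_nonneg _) hgint
    exact Filter.Eventually.of_forall hptws
  have hcomp : (∫ ω, ((∑ k ∈ Finset.range K,
        |((Ah (k+1) ω + Ah k ω)/2) * Bh (k+1) ω * (1/(K:ℝ)) - D k|)
        + ∑ k ∈ Finset.range K, |D k - Iv k|) ∂μ)
      = (∑ k ∈ Finset.range K, ∫ ω,
          |((Ah (k+1) ω + Ah k ω)/2) * Bh (k+1) ω * (1/(K:ℝ)) - D k| ∂μ)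
        + ∑ k ∈ Finset.range K, |D k - Iv k| := by
    rw [integral_add hgK (integrable_const _), integral_finset_sum _ (fun k hk => (hstoch k hk).1),
      integral_const]
    simp
  have hb1 : (∑ k ∈ Finset.range K, ∫ ω,
        |((Ah (k+1) ω + Ah k ω)/2) * Bh (k+1) ω * (1/(K:ℝ)) - D k| ∂μ) ≤ cs / sN := by
    calc (∑ k ∈ Finset.range K, ∫ ω,
          |((Ah (k+1) ω + Ah k ω)/2) * Bh (k+1) ω * (1/(K:ℝ)) - D k| ∂μ)
        ≤ ∑ _k ∈ Finset.range K, (1/(K:ℝ)) * (cs / sN) :=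
          Finset.sum_le_sum (fun k hk => (hstoch k hk).2)
      _ = (K:ℝ) * ((1/(K:ℝ)) * (cs / sN)) := by
          rw [Finset.sum_const, Finset.card_range, nsmul_eq_mul]
      _ = cs / sN := by field_simp
  have hb2 : (∑ k ∈ Finset.range K, |D k - Iv k|) ≤ cdet * (1/(K:ℝ))^2 := by
    calc (∑ k ∈ Finset.range K, |D k - Iv k|)
        ≤ ∑ _k ∈ Finset.range K, cdet * (1/(K:ℝ))^3 := Finset.sum_le_sum hdet
      _ = (K:ℝ) * (cdet * (1/(K:ℝ))^3) := by
          rw [Finset.sum_const, Finset.card_range, nsmul_eq_mul]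
      _ = cdet * (1/(K:ℝ))^2 := by field_simp
  have hfin : cs / sN + cdet * (1/(K:ℝ))^2
      ≤ (cs + cdet + 1) * ((1/(K:ℝ))^2 + 1/sN) := by
    have hq : (0:ℝ) ≤ (1/(K:ℝ))^2 := by positivity
    have hr : (0:ℝ) ≤ 1/sN := by positivity
    have h1 : cs / sN = cs * (1/sN) := by ring
    rw [h1]
    nlinarith [mul_nonneg hcs0 hq, mul_nonneg hcdet0 hr, hq, hr]
  calc (∫ ω, |(∑ k ∈ Finset.range K,
        ((Ah (k + 1) ω + Ah k ω) / 2) * Bh (k + 1) ω * (1 / (K:ℝ)))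
        - ∫ τ in (0:ℝ)..1, A τ * B τ| ∂μ)
      ≤ (∑ k ∈ Finset.range K, ∫ ω,
          |((Ah (k+1) ω + Ah k ω)/2) * Bh (k+1) ω * (1/(K:ℝ)) - D k| ∂μ)
        + ∑ k ∈ Finset.range K, |D k - Iv k| := hout.trans (le_of_eq hcomp)
    _ ≤ cs / sN + cdet * (1/(K:ℝ))^2 := add_le_add hb1 hb2
    _ ≤ (cs + cdet + 1) * ((1/(K:ℝ))^2 + 1/sN) := hfin
end
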